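/- Let g_n(a, b) = p_n^{-1} ∑_{i=1}^{p_n} (a_i − b_i)^2 for a, b ∈ ℝ^{p_n}, and for a ∈ ℝ^{p_n} let â denote its projection onto the isotonic cone {y : y_1 ≤ y_2 ≤ … ≤ y_{p_n}} (the Pool-Adjacent-Violators fit minimizing g_n(a, ·)). If a and b have all components in [1, Λ] with Λ ≥ 1, then |g_n(a, â) − g_n(b, b̂)| ≤ 4·Λ·√(g_n(a, b)). -/

import Mathlib

open BigOperators

lemma clamp_sq_le {x t Λ : ℝ} (hΛ : 1 ≤ Λ) (hx : x ∈ Set.Icc 1 Λ) :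
    (x - max 1 (min Λ t)) ^ 2 ≤ (x - t) ^ 2 := by
  obtain ⟨h1, h2⟩ := hx
  rcases le_total t 1 with h | h
  · rw [min_eq_right (h.trans hΛ), max_eq_left h]; nlinarith
  · rcases le_total Λ t with h' | h'
    · rw [min_eq_left h', max_eq_right hΛ]; nlinarith
    · rw [min_eq_right h', max_eq_right h]

lemma cs_aux {p : ℕ} (hp : 0 < p) (d : Fin p → ℝ) :
    (p : ℝ)⁻¹ * ∑ i, |d i| ≤ Real.sqrt ((p : ℝ)⁻¹ * ∑ i, d i ^ 2) := by
  have hpR : (0:ℝ) < p := by exact_mod_cast hp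
  apply Real.le_sqrt_of_sq_le
  have h := sq_sum_le_card_mul_sum_sq (s := Finset.univ) (f := fun i => |d i|)
  simp only [Finset.card_univ, Fintype.card_fin, sq_abs] at h
  rw [mul_pow]
  calc ((p:ℝ)⁻¹) ^ 2 * (∑ i, |d i|) ^ 2 ≤ ((p:ℝ)⁻¹) ^ 2 * ((p:ℝ) * ∑ i, d i ^ 2) := by
        apply mul_le_mul_of_nonneg_left _ (by positivity)
        exact_mod_cast h
    _ = (p : ℝ)⁻¹ * ∑ i, d i ^ 2 := by field_simp

lemma one_side {p : ℕ} (hp : 0 < p) (Λ : ℝ) (hΛ : 1 ≤ Λ)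
    (a b ahat bhat : Fin p → ℝ)
    (ha : ∀ i, a i ∈ Set.Icc 1 Λ) (hb : ∀ i, b i ∈ Set.Icc 1 Λ)
    (g : (Fin p → ℝ) → (Fin p → ℝ) → ℝ)
    (hg : ∀ x y, g x y = (p : ℝ)⁻¹ * ∑ i, (x i - y i) ^ 2)
    (hahat : Monotone ahat ∧ ∀ y : Fin p → ℝ, Monotone y → g a ahat ≤ g a y)
    (hbhat : Monotone bhat ∧ ∀ y : Fin p → ℝ, Monotone y → g b bhat ≤ g b y) :
    g a ahat - g b bhat ≤ 2 * Λ * Real.sqrt (g a b) := by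
  have hpR : (0:ℝ) < p := by exact_mod_cast hp
  set c : Fin p → ℝ := fun i => max 1 (min Λ (bhat i)) with hc
  have hmono : Monotone c := fun i j hij =>
    max_le_max le_rfl (min_le_min le_rfl (hbhat.1 hij))
  have h1 : g a ahat ≤ g a c := hahat.2 c hmono
  have h2 : g b c ≤ g b bhat := by
    rw [hg, hg]
    apply mul_le_mul_of_nonneg_left _ (by positivity)
    exact Finset.sum_le_sum fun i _ => clamp_sq_le hΛ (hb i)
  have key : g a c - g b c ≤ 2 * Λ * ((p : ℝ)⁻¹ * ∑ i, |a i - b i|) := by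
    rw [hg, hg, ← mul_sub, ← Finset.sum_sub_distrib]
    rw [show 2 * Λ * ((p : ℝ)⁻¹ * ∑ i, |a i - b i|)
        = (p : ℝ)⁻¹ * ∑ i, 2 * Λ * |a i - b i| by
      simp only [Finset.mul_sum]
      exact Finset.sum_congr rfl fun i _ => by ring]
    apply mul_le_mul_of_nonneg_left _ (by positivity)
    apply Finset.sum_le_sum
    intro i _
    have hai := ha i; have hbi := hb i
    have hci : c i ∈ Set.Icc 1 Λ := by
      constructor
      · exact le_max_left _ _
      · exact max_le hΛ (min_le_left _ _)
    obtain ⟨ha1, ha2⟩ := hai; obtain ⟨hb1, hb2⟩ := hbi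
    obtain ⟨hc1, hc2⟩ := hci
    rcases le_total (a i) (b i) with h | h
    · rw [abs_of_nonpos (by linarith)]; nlinarith
    · rw [abs_of_nonneg (by linarith)]; nlinarith
  have hcs := cs_aux hp (fun i => a i - b i)
  have : g a c - g b c ≤ 2 * Λ * Real.sqrt (g a b) := by
    rw [hg a b]
    calc g a c - g b c ≤ 2 * Λ * ((p : ℝ)⁻¹ * ∑ i, |a i - b i|) := key
      _ ≤ 2 * Λ * Real.sqrt ((p : ℝ)⁻¹ * ∑ i, (a i - b i) ^ 2) := by
          apply mul_le_mul_of_nonneg_left hcs (by linarith)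
  linarith

/-- Stability of the isotonic (PAV) fit: if `a, b` have entries in `[1, Λ]` and `â, b̂` are
their isotonic projections, then `|g(a, â) − g(b, b̂)| ≤ 4Λ √(g(a, b))`, where
`g(x, y) = p⁻¹ ∑ (xᵢ − yᵢ)²`. -/
theorem stmt_15 {p : ℕ} (hp : 0 < p) (Λ : ℝ) (hΛ : 1 ≤ Λ)
    (a b ahat bhat : Fin p → ℝ)
    (ha : ∀ i, a i ∈ Set.Icc 1 Λ) (hb : ∀ i, b i ∈ Set.Icc 1 Λ)
    (g : (Fin p → ℝ) → (Fin p → ℝ) → ℝ)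
    (hg : ∀ x y, g x y = (p : ℝ)⁻¹ * ∑ i, (x i - y i) ^ 2)
    (hahat : Monotone ahat ∧ ∀ y : Fin p → ℝ, Monotone y → g a ahat ≤ g a y)
    (hbhat : Monotone bhat ∧ ∀ y : Fin p → ℝ, Monotone y → g b bhat ≤ g b y) :
    |g a ahat - g b bhat| ≤ 4 * Λ * Real.sqrt (g a b) := by
  have hsym : g b a = g a b := by
    rw [hg, hg]; congr 1; apply Finset.sum_congr rfl; intro i _; ring
  have h1 := one_side hp Λ hΛ a b ahat bhat ha hb g hg hahat hbhat
  have h2 := one_side hp Λ hΛ b a bhat ahat hb ha g hg hbhat hahat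
  rw [hsym] at h2
  have hs : 0 ≤ Real.sqrt (g a b) := Real.sqrt_nonneg _
  rw [abs_sub_le_iff]
  constructor <;> nlinarith
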